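/- Let D ∈ ℂ[a₁,b₁,c₁,a₂,b₂,c₂] be the polynomial D = a₁b₁a₂² + a₁²a₂b₂ + c₁²a₂c₂ + b₁c₁b₂² + b₁²b₂c₂ + a₁c₁c₂². For every pair of nonzero vectors u = (a₁,b₁,c₁) ∈ ℂ³∖{0} and v = (a₂,b₂,c₂) ∈ ℂ³∖{0} with D(u,v) = 0, not all six partial derivatives ∂D/∂a₁, ∂D/∂b₁, ∂D/∂c₁, ∂D/∂a₂, ∂D/∂b₂, ∂D/∂c₂ vanish at (u,v). (Equivalently, the hypersurface 𝒫₂ = {D = 0} of bidegree (2,2) in ℙ²×ℙ² is smooth.) -/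

import Mathlib

open MvPolynomial

/-- The bidegree `(2,2)` apolarity polynomial of the Klein quartic, in the six variables
`a₁ = X 0`, `b₁ = X 1`, `c₁ = X 2`, `a₂ = X 3`, `b₂ = X 4`, `c₂ = X 5`:
`D = a₁b₁a₂² + a₁²a₂b₂ + c₁²a₂c₂ + b₁c₁b₂² + b₁²b₂c₂ + a₁c₁c₂²`. -/
noncomputable def kleinApolarityPoly : MvPolynomial (Fin 6) ℂ :=
  X 0 * X 1 * X 3 ^ 2 + X 0 ^ 2 * X 3 * X 4 + X 2 ^ 2 * X 3 * X 5
    + X 1 * X 2 * X 4 ^ 2 + X 1 ^ 2 * X 4 * X 5 + X 0 * X 2 * X 5 ^ 2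

/-- **Smoothness of the bidegree `(2,2)` hypersurface `𝒫₂ ⊂ ℙ²×ℙ²`.**
At every point of the affine cone of `{D = 0}` with both `ℂ³`-components nonzero,
not all six partial derivatives of `D` vanish. -/
theorem P2_smooth (a₁ b₁ c₁ a₂ b₂ c₂ : ℂ)
    (hu : ![a₁, b₁, c₁] ≠ 0) (hv : ![a₂, b₂, c₂] ≠ 0)
    (hD : eval ![a₁, b₁, c₁, a₂, b₂, c₂] kleinApolarityPoly = 0) :
    ∃ k : Fin 6, eval ![a₁, b₁, c₁, a₂, b₂, c₂] (pderiv k kleinApolarityPoly) ≠ 0 := by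
  by_contra hcon
  push_neg at hcon
  have e2 : ![a₁, b₁, c₁, a₂, b₂, c₂] 2 = c₁ := rfl
  have e3 : ![a₁, b₁, c₁, a₂, b₂, c₂] 3 = a₂ := rfl
  have e4 : ![a₁, b₁, c₁, a₂, b₂, c₂] 4 = b₂ := rfl
  have e5 : ![a₁, b₁, c₁, a₂, b₂, c₂] 5 = c₂ := rfl
  have H0 : b₁*a₂^2 + 2*a₁*a₂*b₂ + c₁*c₂^2 = 0 := by
    have h := hcon 0
    simp only [kleinApolarityPoly, map_add, eval_mul, eval_pow, eval_X, pderiv_mul, pderiv_pow,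
      pderiv_X, Pi.single_apply, Fin.isValue, Fin.reduceEq, reduceIte, e2, e3, e4, e5] at h
    norm_num at h
    linear_combination h
  have H1 : a₁*a₂^2 + c₁*b₂^2 + 2*b₁*b₂*c₂ = 0 := by
    have h := hcon 1
    simp only [kleinApolarityPoly, map_add, eval_mul, eval_pow, eval_X, pderiv_mul, pderiv_pow,
      pderiv_X, Pi.single_apply, Fin.isValue, Fin.reduceEq, reduceIte, e2, e3, e4, e5] at h
    norm_num at h
    linear_combination h
  have H2 : 2*c₁*a₂*c₂ + b₁*b₂^2 + a₁*c₂^2 = 0 := by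
    have h := hcon 2
    simp only [kleinApolarityPoly, map_add, eval_mul, eval_pow, eval_X, pderiv_mul, pderiv_pow,
      pderiv_X, Pi.single_apply, Fin.isValue, Fin.reduceEq, reduceIte, e2, e3, e4, e5] at h
    norm_num at h
    linear_combination h
  have H3 : 2*a₁*b₁*a₂ + a₁^2*b₂ + c₁^2*c₂ = 0 := by
    have h := hcon 3
    simp only [kleinApolarityPoly, map_add, eval_mul, eval_pow, eval_X, pderiv_mul, pderiv_pow,
      pderiv_X, Pi.single_apply, Fin.isValue, Fin.reduceEq, reduceIte, e2, e3, e4, e5] at h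
    norm_num at h
    linear_combination h
  have H4 : a₁^2*a₂ + 2*b₁*c₁*b₂ + b₁^2*c₂ = 0 := by
    have h := hcon 4
    simp only [kleinApolarityPoly, map_add, eval_mul, eval_pow, eval_X, pderiv_mul, pderiv_pow,
      pderiv_X, Pi.single_apply, Fin.isValue, Fin.reduceEq, reduceIte, e2, e3, e4, e5] at h
    norm_num at h
    linear_combination h
  have H5 : c₁^2*a₂ + b₁^2*b₂ + 2*a₁*c₁*c₂ = 0 := by
    have h := hcon 5
    simp only [kleinApolarityPoly, map_add, eval_mul, eval_pow, eval_X, pderiv_mul, pderiv_pow,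
      pderiv_X, Pi.single_apply, Fin.isValue, Fin.reduceEq, reduceIte, e2, e3, e4, e5] at h
    norm_num at h
    linear_combination h
  have paa : a₁*a₂ = 0 := by
    have hp : (a₁*a₂)^4 = 0 := by
      linear_combination ((9/28)*c₁^3*a₂*c₂ + (-9/14)*b₁*c₁^2*b₂^2 + (-7/4)*b₁^2*c₁*b₂*c₂ + (-17/28)*b₁^3*c₂^2 + (3/56)*a₁*c₁^2*c₂^2 + (-5/56)*a₁*b₁*c₁*a₂^2 + (-5/28)*a₁^2*c₁*a₂*b₂ + (-13/14)*a₁^2*b₁*a₂*c₂) * H0 + ((-9/14)*c₁^3*b₂*c₂ + (-1/56)*b₁*c₁^2*c₂^2 + (5/56)*b₁^2*c₁*a₂^2 + (9/28)*a₁*b₁^2*a₂*c₂ + (-9/14)*a₁^2*c₁*b₂^2 + (-1/7)*a₁^2*b₁*b₂*c₂ + a₁^3*a₂^2) * H1 + ((-3/56)*c₁^3*c₂^2 + (-9/56)*b₁*c₁^2*a₂^2 + (9/28)*a₁*b₁*c₁*a₂*c₂) * H2 + ((9/14)*c₁^2*b₂^3 + (-3/14)*c₁^2*a₂*c₂^2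 + (10/7)*b₁*c₁*b₂^2*c₂ + (2/7)*b₁^2*b₂*c₂^2) * H3 + ((2/7)*c₁^2*b₂*c₂^2 + (17/28)*b₁*c₁*c₂^3 + (5/14)*b₁*c₁*a₂^2*b₂ + (17/28)*b₁^2*a₂^2*c₂) * H4
    exact pow_eq_zero_iff (by norm_num) |>.mp hp
  have pab : a₁*b₂ = 0 := by
    have hp : (a₁*b₂)^4 = 0 := by
      linear_combination ((113/84)*b₁*c₁^2*b₂*c₂ + (115/84)*b₁^2*c₁*c₂^2 + (-75/28)*a₁*c₁^2*a₂^2 + (2/3)*a₁*b₁^2*a₂*b₂ + (3/7)*a₁^2*c₁*a₂*c₂ - a₁^2*b₁*b₂^2) * H0 + ((1/7)*c₁^3*c₂^2 + (-275/84)*b₁*c₁^2*a₂^2 + (15/14)*b₁^3*a₂*b₂ + (-281/84)*a₁*b₁*c₁*a₂*c₂ + (15/28)*a₁*b₁^2*b₂^2 + (-6/7)*a₁^2*c₁*b₂*c₂) * H1 + ((-125/84)*c₁^3*a₂^2 + (-15/14)*b₁^2*c₁*a₂*b₂ + (-15/7)*b₁^3*a₂*c₂ + (169/84)*a₁*c₁^2*a₂*c₂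 + (-15/28)*a₁*b₁*c₁*b₂^2 + (-15/14)*a₁*b₁^2*b₂*c₂) * H2 + ((-1/7)*c₁^2*b₂^2*c₂ + (125/42)*c₁^2*a₂^3 + (13/4)*b₁*c₁*b₂*c₂^2 + (15/14)*b₁^2*c₂^3 + (-73/84)*b₁^2*a₂^2*b₂ + a₁^2*b₂^3) * H3 + ((-205/84)*c₁^2*c₂^3 + (50/21)*c₁^2*a₂^2*b₂ + (35/12)*b₁*c₁*a₂^2*c₂) * H4
    exact pow_eq_zero_iff (by norm_num) |>.mp hp
  have pac : a₁*c₂ = 0 := by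
    have hp : (a₁*c₂)^4 = 0 := by
      linear_combination ((-20/21)*b₁^2*c₁*a₂*c₂ + (-10/21)*b₁^3*b₂^2 + (-45/28)*a₁*c₁^2*b₂^2 + (-113/84)*a₁*b₁*c₁*b₂*c₂ + (1/3)*a₁*b₁^2*c₂^2 + (11/84)*a₁^3*a₂*c₂) * H0 + ((-55/28)*b₁*c₁^2*b₂^2 + (-33/28)*b₁^2*c₁*b₂*c₂ + (47/21)*a₁*c₁^2*c₂^2 + (-11/84)*a₁^2*b₁*a₂*c₂ + (-11/42)*a₁^3*b₂*c₂) * H1 + ((-25/28)*c₁^3*b₂^2 + (-263/84)*b₁*c₁^2*b₂*c₂ + (-1/3)*b₁^2*c₁*c₂^2 + (10/21)*b₁^3*a₂^2 + (-179/84)*a₁^2*c₁*a₂*c₂ + (-10/21)*a₁^2*b₁*b₂^2 + a₁^3*c₂^2) * H2 + ((25/14)*c₁^2*a₂*b₂^2 + (31/14)*b₁*c₁*a₂*b₂*c₂ + (10/21)*b₁^2*b₂^3 + (-17/42)*b₁^2*a₂*c₂^2 + (11/42)*a₁*c₁*b₂^2*c₂) * H3 + ((10/7)*c₁^2*b₂^3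 + (85/42)*c₁^2*a₂*c₂^2 + (19/6)*b₁*c₁*b₂^2*c₂) * H4
    exact pow_eq_zero_iff (by norm_num) |>.mp hp
  have pba : b₁*a₂ = 0 := by
    have hp : (b₁*a₂)^4 = 0 := by
      linear_combination ((11/84)*b₁*c₁^2*b₂*c₂ + (-17/84)*b₁^2*c₁*c₂^2 + b₁^3*a₂^2 + (15/28)*a₁*c₁^2*a₂^2 + (2/3)*a₁*b₁^2*a₂*b₂ + (2/7)*a₁^2*c₁*a₂*c₂) * H0 + ((-4/7)*c₁^3*c₂^2 + (55/84)*b₁*c₁^2*a₂^2 + (5/14)*b₁^3*a₂*b₂ + (-11/12)*a₁*b₁*c₁*a₂*c₂ + (5/28)*a₁*b₁^2*b₂^2 + (-4/7)*a₁^2*c₁*b₂*c₂) * H1 + ((25/84)*c₁^3*a₂^2 + (-5/14)*b₁^2*c₁*a₂*b₂ + (-5/7)*b₁^3*a₂*c₂ + (-11/84)*a₁*c₁^2*a₂*c₂ + (-5/28)*a₁*b₁*c₁*b₂^2 + (-5/14)*a₁*b₁^2*b₂*c₂) * H2 + ((4/7)*c₁^2*b₂^2*c₂ + (-25/42)*c₁^2*a₂^3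 + (37/28)*b₁*c₁*b₂*c₂^2 + (5/14)*b₁^2*c₂^3 + (-127/84)*b₁^2*a₂^2*b₂) * H3 + ((-13/84)*c₁^2*c₂^3 + (-10/21)*c₁^2*a₂^2*b₂ + (53/84)*b₁*c₁*a₂^2*c₂) * H4
    exact pow_eq_zero_iff (by norm_num) |>.mp hp
  have pbb : b₁*b₂ = 0 := by
    have hp : (b₁*b₂)^4 = 0 := by
      linear_combination ((-11/168)*c₁^3*b₂*c₂ + (19/84)*b₁*c₁^2*c₂^2 + (-53/42)*a₁*b₁*c₁*a₂*b₂ + (1/3)*a₁*b₁^2*a₂*c₂ + (1/56)*a₁^2*c₁*b₂^2) * H0 + ((-43/28)*b₁^2*c₁*a₂*b₂ + (25/84)*a₁*c₁^2*a₂*c₂ + (13/84)*a₁*b₁*c₁*b₂^2 + (-1/2)*a₁*b₁^2*b₂*c₂) * H1 + ((-31/84)*b₁*c₁^2*a₂*b₂ + (5/42)*b₁^2*c₁*a₂*c₂ + b₁^3*b₂^2 + (-1/12)*a₁*c₁^2*b₂^2 + (19/84)*a₁*b₁*c₁*b₂*c₂) * H2 + ((11/168)*c₁^2*b₂*c₂^2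 + (-19/84)*b₁*c₁*c₂^3 + (235/168)*b₁*c₁*a₂^2*b₂ + (-1/6)*b₁^2*a₂^2*c₂) * H3 + ((-25/84)*c₁^2*a₂^2*c₂ + (20/21)*b₁*c₁*a₂*b₂^2 + (-1/28)*a₁*c₁*b₂^3) * H4
    exact pow_eq_zero_iff (by norm_num) |>.mp hp
  have pbc : b₁*c₂ = 0 := by
    have hp : (b₁*c₂)^4 = 0 := by
      linear_combination ((-5/4)*b₁*c₁^2*a₂*c₂ + (1/2)*b₁^3*b₂*c₂ + (5/28)*a₁*c₁^2*b₂*c₂ + (-5/56)*a₁*b₁*c₁*c₂^2 + (1/8)*a₁*b₁^2*a₂^2) * H0 + ((45/28)*b₁*c₁^2*b₂*c₂ + (-45/56)*b₁^2*c₁*c₂^2 + (-1/8)*b₁^3*a₂^2) * H1 + ((-5/28)*c₁^3*b₂*c₂ + (5/56)*b₁*c₁^2*c₂^2 + (5/8)*b₁^2*c₁*a₂^2 - a₁*b₁^2*a₂*c₂) * H2 + ((5/14)*c₁^2*a₂*b₂*c₂ + (15/14)*b₁*c₁*a₂*c₂^2) * H3 + ((-5/7)*c₁^2*b₂^2*c₂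 + (-25/28)*b₁*c₁*b₂*c₂^2 + b₁^2*c₂^3 + (-1/4)*b₁^2*a₂^2*b₂) * H4
    exact pow_eq_zero_iff (by norm_num) |>.mp hp
  have pca : c₁*a₂ = 0 := by
    have hp : (c₁*a₂)^4 = 0 := by
      linear_combination (-b₁*c₁^2*a₂*b₂ + (-10/7)*b₁^2*c₁*a₂*c₂ + (-5/7)*b₁^3*b₂^2 + (33/28)*a₁*c₁^2*b₂^2 + (85/28)*a₁*b₁*c₁*b₂*c₂ + (-5/28)*a₁^3*a₂*c₂) * H0 + (-2*c₁^3*a₂*c₂ + (59/28)*b₁*c₁^2*b₂^2 + (55/28)*b₁^2*c₁*b₂*c₂ + (-15/7)*a₁*c₁^2*c₂^2 + (5/28)*a₁^2*b₁*a₂*c₂ + (5/14)*a₁^3*b₂*c₂) * H1 + ((37/28)*c₁^3*b₂^2 + (5/4)*b₁*c₁^2*b₂*c₂ + (5/7)*b₁^3*a₂^2 + (5/28)*a₁^2*c₁*a₂*c₂ + (-5/7)*a₁^2*b₁*b₂^2) * H2 + ((-9/14)*c₁^2*a₂*b₂^2 + (-15/14)*b₁*c₁*a₂*b₂*c₂ +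 (5/7)*b₁^2*b₂^3 + (-5/14)*b₁^2*a₂*c₂^2 + (-5/14)*a₁*c₁*b₂^2*c₂) * H3 + ((-12/7)*c₁^2*b₂^3 + (25/14)*c₁^2*a₂*c₂^2 + (-45/14)*b₁*c₁*b₂^2*c₂) * H4 + (c₁^2*a₂^3) * H5
    exact pow_eq_zero_iff (by norm_num) |>.mp hp
  have pcb : c₁*b₂ = 0 := by
    have hp : (c₁*b₂)^4 = 0 := by
      linear_combination ((-2/5)*c₁^3*a₂*b₂ + (-13/20)*b₁*c₁^2*a₂*c₂ + (1/5)*b₁^2*c₁*b₂^2 + (2/5)*b₁^3*b₂*c₂ + (19/140)*a₁*c₁^2*b₂*c₂ + (-69/280)*a₁*b₁*c₁*c₂^2 + (1/8)*a₁*b₁^2*a₂^2 + (-1/10)*a₁^2*b₁*a₂*b₂) * H0 + (c₁^3*b₂^2 + (31/140)*b₁*c₁^2*b₂*c₂ + (-117/280)*b₁^2*c₁*c₂^2 + (-1/8)*b₁^3*a₂^2 + (-1/5)*a₁*c₁^2*a₂^2 + (1/5)*a₁^2*b₁*b₂^2) * H1 + ((-19/140)*c₁^3*b₂*c₂ + (69/280)*b₁*c₁^2*c₂^2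 + (9/40)*b₁^2*c₁*a₂^2) * H2 + ((47/70)*c₁^2*a₂*b₂*c₂ + (-1/5)*b₁*c₁*b₂^3 + (11/70)*b₁*c₁*a₂*c₂^2 + (-2/5)*b₁^2*b₂^2*c₂) * H3 + ((-33/35)*c₁^2*b₂^2*c₂ + (1/5)*c₁^2*a₂^3 + (61/140)*b₁*c₁*b₂*c₂^2 + (-3/20)*b₁^2*a₂^2*b₂) * H4
    exact pow_eq_zero_iff (by norm_num) |>.mp hp
  have pcc : c₁*c₂ = 0 := by
    have hp : (c₁*c₂)^4 = 0 := by
      linear_combination ((1/4)*c₁^3*c₂^2 + (9/14)*a₁*c₁^2*a₂*b₂ + (-29/28)*a₁*b₁*c₁*a₂*c₂ + (-15/28)*a₁*b₁^2*b₂^2) * H0 + ((11/14)*b₁*c₁^2*a₂*b₂ + (-9/28)*b₁^2*c₁*a₂*c₂ + (-9/28)*b₁^3*b₂^2 + (3/4)*a₁*b₁*c₁*b₂*c₂) * H1 + ((5/14)*c₁^3*a₂*b₂ + (-13/28)*b₁*c₁^2*a₂*c₂ + (-27/28)*b₁^2*c₁*b₂^2 + (-3/4)*a₁*c₁^2*b₂*c₂)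 * H2 + ((3/4)*c₁^2*c₂^3 + (-5/7)*c₁^2*a₂^2*b₂ + (19/28)*b₁*c₁*a₂^2*c₂ + (3/7)*b₁^2*a₂*b₂^2) * H3 + ((-4/7)*c₁^2*a₂*b₂^2 + (9/14)*b₁*c₁*a₂*b₂*c₂ + (9/14)*b₁^2*b₂^3) * H4
    exact pow_eq_zero_iff (by norm_num) |>.mp hp
  have hu' : a₁ ≠ 0 ∨ b₁ ≠ 0 ∨ c₁ ≠ 0 := by
    by_contra h
    push_neg at h
    exact hu (by ext i; fin_cases i <;> simp [h.1, h.2.1, h.2.2])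
  have hv0 : a₂ = 0 ∧ b₂ = 0 ∧ c₂ = 0 := by
    rcases hu' with h | h | h
    · exact ⟨(mul_eq_zero.mp paa).resolve_left h, (mul_eq_zero.mp pab).resolve_left h,
        (mul_eq_zero.mp pac).resolve_left h⟩
    · exact ⟨(mul_eq_zero.mp pba).resolve_left h, (mul_eq_zero.mp pbb).resolve_left h,
        (mul_eq_zero.mp pbc).resolve_left h⟩
    · exact ⟨(mul_eq_zero.mp pca).resolve_left h, (mul_eq_zero.mp pcb).resolve_left h,
        (mul_eq_zero.mp pcc).resolve_left h⟩
  exact hv (by ext i; fin_cases i <;> simp [hv0.1, hv0.2.1, hv0.2.2])
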